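/- The total number of ballot sequences of length n, i.e., sequences α ∈ {0,1}^n with Σ_{i=1}^r a_i ≤ r/2 for all r, equals the central binomial coefficient C(n, ⌊n/2⌋). -/

import Mathlib

/-- `α ∈ {0,1}^n` is a ballot sequence if every prefix of length `r` contains at
most `r/2` ones. -/
def IsBallot {n : ℕ} (α : Fin n → Bool) : Prop :=
  ∀ r : ℕ, r ≤ n →
    2 * (Finset.univ.filter (fun i : Fin n => (i : ℕ) < r ∧ α i = true)).card ≤ r
attribute [local instance] Classical.propDecidable

open Finset

/-- prefix count of ones -/
def pc {n : ℕ} (α : Fin n → Bool) (r : ℕ) : ℕ :=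
  (univ.filter fun i : Fin n => (i : ℕ) < r ∧ α i = true).card

/-- total number of ones -/
def ones {n : ℕ} (α : Fin n → Bool) : ℕ :=
  (univ.filter fun i : Fin n => α i = true).card

lemma isBallot_iff {n : ℕ} (α : Fin n → Bool) :
    IsBallot α ↔ ∀ r ≤ n, 2 * pc α r ≤ r := by
  unfold IsBallot pc
  constructor
  · intro h r hr; have := h r hr; convert this using 3
  · intro h r hr; have := h r hr; convert this using 3

lemma pc_eq_sum {n : ℕ} (α : Fin n → Bool) (r : ℕ) :
    pc α r = ∑ i : Fin n, if (i : ℕ) < r ∧ α i = true then 1 else 0 :=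
  Finset.card_filter _ _

lemma ones_eq_sum {n : ℕ} (α : Fin n → Bool) :
    ones α = ∑ i : Fin n, if α i = true then 1 else 0 :=
  Finset.card_filter _ _

lemma pc_snoc {n : ℕ} (β : Fin n → Bool) (b : Bool) {r : ℕ} (hr : r ≤ n) :
    pc (Fin.snoc β b) r = pc β r := by
  rw [pc_eq_sum, pc_eq_sum, Fin.sum_univ_castSucc]
  have h1 : ∀ i : Fin n, ((Fin.castSucc i : Fin (n+1)) : ℕ) = (i : ℕ) := fun i => rfl
  have h2 : ¬ (n < r) := by omega
  simp [Fin.snoc_castSucc, Fin.snoc_last, h1, h2]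

lemma pc_eq_ones {n : ℕ} (α : Fin n → Bool) : pc α n = ones α := by
  unfold pc ones
  congr 1
  apply Finset.filter_congr
  intro i _
  simp [i.isLt]

lemma ones_snoc {n : ℕ} (β : Fin n → Bool) (b : Bool) :
    ones (Fin.snoc β b) = ones β + (if b = true then 1 else 0) := by
  rw [ones_eq_sum, ones_eq_sum, Fin.sum_univ_castSucc]
  simp [Fin.snoc_castSucc, Fin.snoc_last]

lemma isBallot_snoc {n : ℕ} (β : Fin n → Bool) (b : Bool) :
    IsBallot (Fin.snoc β b) ↔
      IsBallot β ∧ 2 * (ones β + (if b = true then 1 else 0)) ≤ n + 1 := by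
  rw [isBallot_iff, isBallot_iff]
  constructor
  · intro h
    refine ⟨fun r hr => ?_, ?_⟩
    · have := h r (le_trans hr (Nat.le_succ n))
      rwa [pc_snoc β b hr] at this
    · have := h (n + 1) le_rfl
      rwa [pc_eq_ones, ones_snoc] at this
  · rintro ⟨h1, h2⟩ r hr
    rcases Nat.lt_or_ge r (n + 1) with h | h
    · have hr' : r ≤ n := Nat.lt_succ_iff.mp h
      rw [pc_snoc β b hr']
      exact h1 r hr'
    · have : r = n + 1 := le_antisymm hr h
      subst this
      rwa [pc_eq_ones, ones_snoc]

lemma ones_snoc_false {n : ℕ} (β : Fin n → Bool) :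
    ones (Fin.snoc β false) = ones β := by
  rw [ones_snoc]; simp

lemma ones_snoc_true {n : ℕ} (β : Fin n → Bool) :
    ones (Fin.snoc β true) = ones β + 1 := by
  rw [ones_snoc]; simp

lemma isBallot_snoc_false {n : ℕ} (β : Fin n → Bool) :
    IsBallot (Fin.snoc β false) ↔ IsBallot β ∧ 2 * ones β ≤ n + 1 := by
  rw [isBallot_snoc]; simp

lemma isBallot_snoc_true {n : ℕ} (β : Fin n → Bool) :
    IsBallot (Fin.snoc β true) ↔ IsBallot β ∧ 2 * (ones β + 1) ≤ n + 1 := by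
  rw [isBallot_snoc]; simp

lemma ballot_ones_le {n : ℕ} (α : Fin n → Bool) (h : IsBallot α) :
    2 * ones α ≤ n := by
  rw [isBallot_iff] at h
  have := h n le_rfl
  rwa [pc_eq_ones] at this

/-- number of ballot sequences of length `n` with exactly `k` ones -/
noncomputable def fB (n k : ℕ) : ℕ :=
  (univ.filter fun α : Fin n → Bool => IsBallot α ∧ ones α = k).card

lemma fB_eq_zero {n k : ℕ} (h : n < 2 * k) : fB n k = 0 := by
  unfold fB
  rw [Finset.card_eq_zero, Finset.filter_eq_empty_iff]
  rintro α - ⟨hb, hk⟩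
  have := ballot_ones_le α hb
  omega

lemma fB_succ (n k : ℕ) :
    fB (n + 1) k = fB n k + (if 1 ≤ k ∧ 2 * k ≤ n + 1 then fB n (k - 1) else 0) := by
  classical
  unfold fB
  rw [← Finset.card_filter_add_card_filter_not
    (p := fun α : Fin (n+1) → Bool => α (Fin.last n) = false)]
  congr 1
  · -- last bit false : bijective to ballots of length n with k ones
    rw [Finset.filter_filter]
    refine Finset.card_bij' (fun α _ => Fin.init α) (fun β _ => Fin.snoc β false)
      ?hi ?hj ?left ?right
    case hi =>
      rintro α hα
      simp only [Finset.mem_filter] at hα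
      obtain ⟨-, ⟨hb, hk⟩, hl⟩ := hα
      have hsnoc : Fin.snoc (Fin.init α) false = α := by
        have := Fin.snoc_init_self α
        rwa [hl] at this
      simp only [Finset.mem_filter]
      refine ⟨Finset.mem_univ _, ?_, ?_⟩
      · have hb' : IsBallot (Fin.snoc (Fin.init α) false) := by rw [hsnoc]; exact hb
        exact ((isBallot_snoc_false (Fin.init α)).mp hb').1
      · have := ones_snoc_false (Fin.init α)
        rw [hsnoc] at this
        omega
    case hj =>
      rintro β hβ
      simp only [Finset.mem_filter] at hβ
      obtain ⟨-, hb, hk⟩ := hβ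
      simp only [Finset.mem_filter]
      refine ⟨Finset.mem_univ _, ⟨?_, ?_⟩, ?_⟩
      · rw [isBallot_snoc_false]
        refine ⟨hb, ?_⟩
        have := ballot_ones_le β hb
        omega
      · rw [ones_snoc_false]
        exact hk
      · simp [Fin.snoc_last]
    case left =>
      intro α hα
      simp only [Finset.mem_filter] at hα
      have := Fin.snoc_init_self α
      rwa [hα.2.2] at this
    case right =>
      intro β _
      exact Fin.init_snoc _ _
  · -- last bit true
    rw [Finset.filter_filter]
    by_cases hc : 1 ≤ k ∧ 2 * k ≤ n + 1
    · rw [if_pos hc]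
      refine Finset.card_bij' (fun α _ => Fin.init α) (fun β _ => Fin.snoc β true)
        ?hi ?hj ?left ?right
      case hi =>
        rintro α hα
        simp only [Finset.mem_filter] at hα
        obtain ⟨-, ⟨hb, hk⟩, hl⟩ := hα
        have hl' : α (Fin.last n) = true := by
          cases h : α (Fin.last n)
          · exact absurd h hl
          · rfl
        have hsnoc : Fin.snoc (Fin.init α) true = α := by
          have := Fin.snoc_init_self α
          rwa [hl'] at this
        simp only [Finset.mem_filter]
        refine ⟨Finset.mem_univ _, ?_, ?_⟩
        · have hb' : IsBallot (Fin.snoc (Fin.init α) true) := by rw [hsnoc]; exact hb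
          exact ((isBallot_snoc_true (Fin.init α)).mp hb').1
        · have := ones_snoc_true (Fin.init α)
          rw [hsnoc] at this
          omega
      case hj =>
        rintro β hβ
        simp only [Finset.mem_filter] at hβ
        obtain ⟨-, hb, hk⟩ := hβ
        simp only [Finset.mem_filter]
        refine ⟨Finset.mem_univ _, ⟨?_, ?_⟩, ?_⟩
        · rw [isBallot_snoc_true]
          refine ⟨hb, ?_⟩
          have := ballot_ones_le β hb
          omega
        · rw [ones_snoc_true]
          omega
        · simp [Fin.snoc_last]
      case left =>
        intro α hα
        simp only [Finset.mem_filter] at hα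
        have hl' : α (Fin.last n) = true := by
          cases h : α (Fin.last n)
          · exact absurd h hα.2.2
          · rfl
        have := Fin.snoc_init_self α
        rwa [hl'] at this
      case right =>
        intro β _
        exact Fin.init_snoc _ _
    · rw [if_neg hc]
      rw [Finset.card_eq_zero, Finset.filter_eq_empty_iff]
      rintro α - ⟨⟨hb, hk⟩, hl⟩
      have hl' : α (Fin.last n) = true := by
        cases h : α (Fin.last n)
        · exact absurd h hl
        · rfl
      have hsnoc : Fin.snoc (Fin.init α) true = α := by
        have := Fin.snoc_init_self α
        rwa [hl'] at this
      have hb' : IsBallot (Fin.snoc (Fin.init α) true) := by rw [hsnoc]; exact hb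
      have h1 := (isBallot_snoc_true (Fin.init α)).mp hb'
      have h2 := ones_snoc_true (Fin.init α)
      rw [hsnoc] at h2
      exact hc ⟨by omega, by omega⟩

/-- `C(n, k-1)` with the convention that it is `0` for `k = 0`. -/
def cB (n k : ℕ) : ℕ :=
  match k with
  | 0 => 0
  | j + 1 => n.choose j

lemma cB_pascal (n j : ℕ) : (n + 1).choose j = cB n j + n.choose j := by
  cases j with
  | zero => simp [cB]
  | succ i => rw [Nat.choose_succ_succ]; simp [cB, Nat.add_comm]

lemma fB_main : ∀ n k : ℕ, 2 * k ≤ n → fB n k + cB n k = n.choose k := by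
  intro n
  induction n with
  | zero =>
    intro k hk
    have hk0 : k = 0 := by omega
    subst hk0
    have : fB 0 0 = 1 := by
      unfold fB
      rw [Finset.filter_true_of_mem, Finset.card_univ]
      · simp
      · intro α _
        constructor
        · rw [isBallot_iff]
          intro r hr
          have : r = 0 := by omega
          subst this
          simp [pc]
        · unfold ones
          simp
    simp [this, cB]
  | succ n ih =>
    intro k hk
    rw [fB_succ]
    cases k with
    | zero =>
      have h0 := ih 0 (by omega)
      simp only [cB] at h0 ⊢
      simp only [Nat.choose_zero_right] at h0 ⊢
      have : ¬ (1 ≤ 0 ∧ 2 * 0 ≤ n + 1) := by omega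
      rw [if_neg this]
      omega
    | succ j =>
      have hif : 1 ≤ j + 1 ∧ 2 * (j + 1) ≤ n + 1 := ⟨by omega, hk⟩
      rw [if_pos hif]
      simp only [Nat.add_sub_cancel]
      have hpas : (n + 1).choose (j + 1) = n.choose j + n.choose (j + 1) :=
        Nat.choose_succ_succ n j
      have hcB : cB (n + 1) (j + 1) = (n + 1).choose j := rfl
      have hcB' : cB n (j + 1) = n.choose j := rfl
      have hcpas := cB_pascal n j
      rcases Nat.lt_or_ge n (2 * (j + 1)) with hlt | hge
      · -- n = 2j+1
        have hn : n = 2 * j + 1 := by omega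
        have h0 : fB n (j + 1) = 0 := fB_eq_zero hlt
        have h2 := ih j (by omega)
        have hsymm : n.choose (j + 1) = n.choose j := by
          have h := Nat.choose_symm (show j + 1 ≤ n by omega)
          rw [show n - (j + 1) = j by omega] at h
          exact h.symm
        omega
      · have h1 := ih (j + 1) hge
        have h2 := ih j (by omega)
        rw [hcB'] at h1
        omega

lemma fB_sum (n : ℕ) : ∀ m : ℕ, m ≤ n / 2 →
    ∑ k ∈ Finset.range (m + 1), fB n k = n.choose m := by
  intro m
  induction m with
  | zero =>
    intro _
    have := fB_main n 0 (by omega)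
    simp only [cB] at this
    simpa using this
  | succ m ih =>
    intro hm
    rw [Finset.sum_range_succ, ih (by omega)]
    have h1 := fB_main n (m + 1) (by omega)
    have h2 : cB n (m + 1) = n.choose m := rfl
    omega

/-- The total number of ballot sequences of length `n` is the central binomial
coefficient `C(n, ⌊n/2⌋)`. -/
theorem stmt10 (n : ℕ) :
    (Finset.univ.filter (fun α : Fin n → Bool => IsBallot α)).card
      = n.choose (n / 2) := by
  classical
  have hfib : (Finset.univ.filter (fun α : Fin n → Bool => IsBallot α)).card
      = ∑ k ∈ Finset.range (n / 2 + 1),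
        ((Finset.univ.filter (fun α : Fin n → Bool => IsBallot α)).filter
          (fun α => ones α = k)).card := by
    apply Finset.card_eq_sum_card_fiberwise
    intro α hα
    rw [Finset.mem_coe, Finset.mem_filter] at hα
    have := ballot_ones_le α hα.2
    rw [Finset.mem_coe, Finset.mem_range]
    omega
  rw [hfib]
  have : ∀ k, ((Finset.univ.filter (fun α : Fin n → Bool => IsBallot α)).filter
      (fun α => ones α = k)).card = fB n k := by
    intro k
    unfold fB
    congr 1
    rw [Finset.filter_filter]
  simp_rw [this]
  exact fB_sum n (n / 2) le_rfl
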